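/- Let k be an algebraically closed field of characteristic p and regard Φ_a as a polynomial over k. Every root λ0 ∈ k of Φ_a with λ0 ≠ 0 and λ0 ≠ 1 is a simple root, i.e. the root multiplicity of Φ_a at λ0 equals 1. -/

import Mathlib

open Polynomial

lemma keyR (R : Type*) [CommRing R] (n x : ℕ) :
    ((n : R) - x) * (n.choose x : ℕ) = ((x : R) + 1) * (n.choose (x+1) : ℕ) := by
  rcases le_or_gt x n with h | h
  · have h2 := Nat.choose_succ_right_eq n x
    have h3 : ((n.choose (x+1) * (x+1) : ℕ) : R) = ((n.choose x * (n - x) : ℕ) : R) := by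
      exact_mod_cast congrArg _ h2
    push_cast [Nat.cast_sub h] at h3
    linear_combination -h3
  · rw [Nat.choose_eq_zero_of_lt h, Nat.choose_eq_zero_of_lt (h.trans (Nat.lt_succ_self x))]
    simp

noncomputable def cfun (k : Type*) [Field k] (b d N n : ℕ) : k :=
  if n ≤ N then ((b.choose (N - n) * d.choose n : ℕ) : k) else 0

noncomputable def Qpoly (k : Type*) [Field k] (b d N : ℕ) : k[X] :=
  ∑ j ∈ Finset.range (N + 1), C ((b.choose (N - j) * d.choose j : ℕ) : k) * X ^ j

lemma coeff_Qpoly (k : Type*) [Field k] (b d N n : ℕ) :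
    (Qpoly k b d N).coeff n = cfun k b d N n := by
  simp only [Qpoly, finset_sum_coeff, coeff_C_mul, coeff_X_pow, mul_ite, mul_one, mul_zero,
    cfun]
  rw [Finset.sum_ite_eq]
  simp [Nat.lt_succ_iff]

lemma hkey (k : Type*) [Field k] (b d N n : ℕ) :
    ((n : k) + 1) * ((n : k) + ((b : k) - N + 1)) * cfun k b d N (n + 1)
      = ((N : k) - n) * ((d : k) - n) * cfun k b d N n := by
  rcases lt_trichotomy n N with hn | rfl | hn
  · obtain ⟨i, hNi⟩ : ∃ i, N = n + 1 + i := ⟨N - (n+1), by omega⟩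
    have e1 : N - (n+1) = i := by omega
    have e2 : N - n = i + 1 := by omega
    rw [cfun, cfun, if_pos (by omega), if_pos (by omega), e1, e2, hNi]
    push_cast
    linear_combination ((n:k)+1) * (d.choose (n+1) : k) * keyR k b i
      - ((i:k)+1) * (b.choose (i+1) : k) * keyR k d n
  · rw [cfun, if_neg (by omega)]
    ring_nf
  · rw [cfun, cfun, if_neg (by omega), if_neg (by omega)]
    simp

lemma ODE (k : Type*) [Field k] (b d N : ℕ) :
    X * derivative (derivative (Qpoly k b d N))
      + C ((b : k) - N + 1) * derivative (Qpoly k b d N)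
      + C ((N : k) + d) * (X * derivative (Qpoly k b d N))
    = C ((N : k) * d) * Qpoly k b d N
      + X ^ 2 * derivative (derivative (Qpoly k b d N))
      + X * derivative (Qpoly k b d N) := by
  ext n
  have hco : ∀ m : ℕ, (Qpoly k b d N).coeff m = cfun k b d N m := coeff_Qpoly k b d N
  rcases n with _ | _ | n
  · simp only [coeff_add, mul_coeff_zero, coeff_X_zero, zero_mul, coeff_C_mul,
      coeff_derivative, coeff_C_zero, hco, pow_two]
    push_cast
    linear_combination hkey k b d N 0
  · simp only [coeff_add, coeff_C_mul, pow_two, mul_assoc X, coeff_X_mul,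
      mul_coeff_zero, coeff_X_zero, zero_mul, coeff_derivative, hco]
    push_cast
    linear_combination hkey k b d N 1
  · simp only [coeff_add, coeff_C_mul, pow_two, mul_assoc X, coeff_X_mul,
      coeff_derivative, hco]
    have h := hkey k b d N (n + 2)
    push_cast at h ⊢
    linear_combination h

lemma choose_ndvd {p n x : ℕ} (hp : p.Prime) (hn : n < p) (hx : x ≤ n) : ¬ p ∣ n.choose x := by
  intro hdvd
  have h1 : p ∣ n.factorial := by
    rw [← Nat.choose_mul_factorial_mul_factorial hx]
    exact (hdvd.mul_right _).mul_right _
  exact absurd ((Nat.Prime.dvd_factorial hp).mp h1) (by omega)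

lemma natDegree_Qpoly_le (k : Type*) [Field k] (b d N : ℕ) :
    (Qpoly k b d N).natDegree ≤ N := by
  apply natDegree_sum_le_of_forall_le
  intro j hj
  refine (natDegree_C_mul_le _ _).trans ?_
  simpa using Nat.lt_succ_iff.mp (Finset.mem_range.mp hj)

lemma Qpoly_ne_zero {p : ℕ} (hp : p.Prime) (k : Type*) [Field k] [CharP k p]
    (b d N : ℕ) (hb : b < p) (hd : d < p) (hNbd : N ≤ b + d) :
    Qpoly k b d N ≠ 0 := by
  intro h0
  have hc := coeff_Qpoly k b d N (min N d)
  rw [h0, coeff_zero, cfun, if_pos (min_le_left _ _)] at hc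
  rcases (Nat.Prime.dvd_mul hp).mp ((CharP.cast_eq_zero_iff k p _).mp hc.symm) with h | h
  · exact choose_ndvd hp hb (by omega) h
  · exact choose_ndvd hp hd (by omega) h

lemma main_aux {p : ℕ} (hp : p.Prime) (k : Type*) [Field k] [CharP k p]
    (b d N : ℕ) (hb : b < p) (hd : d < p) (hN : N + 1 < p) (hNbd : N ≤ b + d)
    (lam : k) (hne0 : lam ≠ 0) (hne1 : lam ≠ 1)
    (hroot : (Qpoly k b d N).IsRoot lam) :
    (Qpoly k b d N).rootMultiplicity lam = 1 := by
  set Q := Qpoly k b d N with hQdef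
  have hQ0 : Q ≠ 0 := Qpoly_ne_zero hp k b d N hb hd hNbd
  have h1 : 1 ≤ Q.rootMultiplicity lam := (rootMultiplicity_pos hQ0).mpr hroot
  have h2 : Q.rootMultiplicity lam < 2 := by
    by_contra hge
    obtain ⟨f, hf⟩ : ∃ f, Q.rootMultiplicity lam = f + 2 := ⟨Q.rootMultiplicity lam - 2, by omega⟩
    set A : k[X] := X - C lam with hA
    set R : k[X] := Q /ₘ A ^ (f + 2) with hR
    have hfac : A ^ (f + 2) * R = Q := by
      rw [hR, hA, ← hf]; exact pow_mul_divByMonic_rootMultiplicity_eq Q lam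
    have hRlam : R.eval lam ≠ 0 := by
      rw [hR, hA, ← hf]; exact eval_divByMonic_pow_rootMultiplicity_ne_zero lam hQ0
    have hAlam : A.eval lam = 0 := by simp [hA]
    have hAne : A ≠ 0 := X_sub_C_ne_zero lam
    -- degree bound
    have hfN : f + 2 ≤ N := by
      have hdvd : A ^ (f + 2) ∣ Q := Dvd.intro _ hfac
      have := natDegree_le_of_dvd hdvd hQ0
      rw [natDegree_pow, hA, natDegree_X_sub_C, mul_one] at this
      exact this.trans (natDegree_Qpoly_le k b d N)
    -- derivatives
    have hd1 : derivative Q = ((f : k[X]) + 2) * (A ^ (f+1) * R) + A ^ (f+2) * derivative R := by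
      rw [← hfac, derivative_mul, derivative_pow, hA, derivative_X_sub_C]
      simp only [C_eq_natCast, show f + 2 - 1 = f + 1 from by omega]
      push_cast
      ring
    have hd2 : derivative (derivative Q)
        = ((f : k[X]) + 2) * ((f : k[X]) + 1) * (A ^ f * R)
          + 2 * ((f : k[X]) + 2) * (A ^ (f+1) * derivative R)
          + A ^ (f+2) * derivative (derivative R) := by
      rw [hd1]
      simp only [derivative_add, derivative_mul, derivative_pow, hA,
        derivative_X_sub_C, derivative_natCast, zero_mul, zero_add, mul_one,
        derivative_ofNat, derivative_one, C_eq_natCast,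
        show f + 2 - 1 = f + 1 from by omega, show f + 1 - 1 = f from by omega]
      push_cast
      ring
    have hO := ODE k b d N
    rw [← hQdef, hd2, hd1, ← hfac] at hO
    set R1 := derivative R
    set R2 := derivative (derivative R)
    have hS : X * (((f : k[X]) + 2) * ((f : k[X]) + 1) * R + 2 * ((f : k[X]) + 2) * (A * R1) + A^2 * R2)
          + C ((b : k) - N + 1) * (((f : k[X]) + 2) * (A * R) + A^2 * R1)
          + C ((N : k) + d) * (X * (((f : k[X]) + 2) * (A * R) + A^2 * R1))
        = C ((N : k) * d) * (A^2 * R)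
          + X^2 * (((f : k[X]) + 2) * ((f : k[X]) + 1) * R + 2 * ((f : k[X]) + 2) * (A * R1) + A^2 * R2)
          + X * (((f : k[X]) + 2) * (A * R) + A^2 * R1) := by
      apply mul_left_cancel₀ (pow_ne_zero f hAne)
      linear_combination hO
    have hev := congrArg (Polynomial.eval lam) hS
    simp only [eval_add, eval_mul, eval_C, eval_X, eval_pow, eval_natCast, eval_ofNat, eval_one,
      hAlam, zero_mul, mul_zero, add_zero, zero_add, zero_pow, OfNat.ofNat_ne_zero,
      ne_eq, not_false_iff] at hev
    have hzero : (((f+2)*(f+1) : ℕ) : k) * (R.eval lam * (lam * (1 - lam))) = 0 := by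
      push_cast
      linear_combination hev
    rcases mul_eq_zero.mp hzero with h | h
    · have hdvd := (CharP.cast_eq_zero_iff k p _).mp h
      rcases (Nat.Prime.dvd_mul hp).mp hdvd with h' | h'
      · exact absurd (Nat.le_of_dvd (by omega) h') (by omega)
      · exact absurd (Nat.le_of_dvd (by omega) h') (by omega)
    · rcases mul_eq_zero.mp h with h' | h'
      · exact hRlam h'
      · rcases mul_eq_zero.mp h' with h'' | h''
        · exact hne0 h''
        · exact hne1 (by linear_combination -h'')
  omega

/-- The `a`-Hasse invariant `Φ_a ∈ 𝔽_p[λ]` of a type `a = (a1, a2, a3, a4)` in the mixed case: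
`Φ_a(λ) = (-1)^(α a3) ∑_{i+j = α a3} C(α a2*, i) C(α a4*, j) λ^j` where `α = (p-1)/m` and
`a_i* = m - a_i`. -/
noncomputable def HasseInv (p m a2 a3 a4 : ℕ) : Polynomial (ZMod p) :=
  let α := (p - 1) / m
  C ((-1 : ZMod p) ^ (α * a3)) *
    ∑ j ∈ Finset.range (α * a3 + 1),
      C ((Nat.choose (α * (m - a2)) (α * a3 - j) * Nat.choose (α * (m - a4)) j : ℕ) : ZMod p) *
        X ^ j

/-- over an algebraically closed field `k` of characteristic `p`, every root of
`Φ_a` different from `0` and `1` is simple. -/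
theorem stmt6 (p m a1 a2 a3 a4 : ℕ) (hp : p.Prime) [Fact p.Prime] (hp2 : 2 < p)
    (hm1 : 1 < m) (hmd : m ∣ p - 1)
    (h1 : 0 < a1 ∧ a1 < m) (h2 : 0 < a2 ∧ a2 < m) (h3 : 0 < a3 ∧ a3 < m)
    (h4 : 0 < a4 ∧ a4 < m) (hsum : a1 + a2 + a3 + a4 = 2 * m)
    (k : Type*) [Field k] [IsAlgClosed k] [CharP k p]
    (lam : k) (hne0 : lam ≠ 0) (hne1 : lam ≠ 1)
    (hroot : ((HasseInv p m a2 a3 a4).map (ZMod.castHom dvd_rfl k)).IsRoot lam) :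
    ((HasseInv p m a2 a3 a4).map (ZMod.castHom dvd_rfl k)).rootMultiplicity lam = 1 := by
  set α := (p - 1) / m with hα
  have hαm : α * m = p - 1 := Nat.div_mul_cancel hmd
  have hα1 : 1 ≤ α := by
    rw [hα, Nat.one_le_div_iff (by omega)]
    exact Nat.le_of_dvd (by omega) hmd
  set b := α * (m - a2) with hb'
  set d := α * (m - a4) with hd'
  set N := α * a3 with hN'
  have key2 : ∀ x : ℕ, x < m → α * x + α ≤ p - 1 := by
    intro x hx
    have h := Nat.mul_le_mul_left α (show x + 1 ≤ m by omega)
    rw [Nat.mul_succ] at h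
    omega
  have hb : b < p := by have := key2 (m - a2) (by omega); omega
  have hd : d < p := by have := key2 (m - a4) (by omega); omega
  have hN : N + 1 < p := by have := key2 a3 (by omega); omega
  have hNbd : N ≤ b + d := by
    have h := Nat.mul_le_mul_left α (show a3 ≤ (m - a2) + (m - a4) by omega)
    rw [Nat.mul_add] at h
    omega
  have hPmap : (HasseInv p m a2 a3 a4).map (ZMod.castHom dvd_rfl k)
      = C ((-1 : k) ^ (α * a3)) * Qpoly k b d N := by
    simp only [HasseInv, Qpoly, Polynomial.map_mul, Polynomial.map_sum, Polynomial.map_pow,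
      Polynomial.map_C, Polynomial.map_X, map_pow, map_neg, map_one, map_natCast,
      Polynomial.map_neg, Polynomial.map_one, Polynomial.map_natCast, C_pow, C_neg, C_1,
      C_eq_natCast]
    rfl
  rw [hPmap] at hroot ⊢
  have hu : ((-1 : k) ^ (α * a3)) ≠ 0 := pow_ne_zero _ (neg_ne_zero.mpr one_ne_zero)
  have hQ0 : Qpoly k b d N ≠ 0 := Qpoly_ne_zero hp k b d N hb hd hNbd
  have hrootQ : (Qpoly k b d N).IsRoot lam := by
    have := hroot
    simp only [IsRoot, eval_mul, eval_C, mul_eq_zero] at this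
    rcases this with h | h
    · exact absurd h hu
    · exact h
  rw [rootMultiplicity_mul (mul_ne_zero (by simp [hu]) hQ0), rootMultiplicity_C, zero_add]
  exact main_aux hp k b d N hb hd hN hNbd lam hne0 hne1 hrootQ
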